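/- Let A1, A2 : ℋ → ℋ commute, C : ℋ → ℰ*, and suppose there exist linear maps E1, E2, M0, M1 : ℰ* → ℰ* with C A1 = E1 C + E2 C A_ξ and C A2 = M0 C + M1 C A_ξ, where A_ξ = ξ1 A1 + ξ2 A2 for fixed scalars ξ1, ξ2. Then for all n1, n2 ≥ 0, C A1^{n1} A2^{n2} is a linear combination (with operator coefficients on the left) of C, C A_ξ, …, C A_ξ^{n1+n2}; consequently ⋂_{k=0}^{n1+n2} ker(C A_ξ^k) ⊆ ker(C A1^{n1} A2^{n2}). -/

import Mathlib

private lemma sum_mulVec_aux {e h : ℕ} (s : Finset ℕ) (f : ℕ → Matrix (Fin e) (Fin h) ℂ)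
    (x : Fin h → ℂ) : (∑ k ∈ s, f k).mulVec x = ∑ k ∈ s, (f k).mulVec x := by
  classical
  induction s using Finset.induction_on with
  | empty => simp [Matrix.zero_mulVec]
  | insert _ _ hk ih =>
    rw [Finset.sum_insert hk, Finset.sum_insert hk, Matrix.add_mulVec, ih]




/-- if C A1 and C A2 are left-operator-combinations of C and C A_ξ,
then C A1^{n1} A2^{n2} is a left-operator-combination of C, C A_ξ, …, C A_ξ^{n1+n2};
consequently ⋂_{k ≤ n1+n2} ker(C A_ξ^k) ⊆ ker(C A1^{n1} A2^{n2}). -/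
theorem observability_reduction {h e : ℕ}
    (A1 A2 : Matrix (Fin h) (Fin h) ℂ) (C : Matrix (Fin e) (Fin h) ℂ)
    (hcomm : A1 * A2 = A2 * A1) (ξ1 ξ2 : ℂ)
    (E1 E2 M0 M1 : Matrix (Fin e) (Fin e) ℂ)
    (h1 : C * A1 = E1 * C + E2 * (C * (ξ1 • A1 + ξ2 • A2)))
    (h2 : C * A2 = M0 * C + M1 * (C * (ξ1 • A1 + ξ2 • A2))) :
    ∀ n1 n2 : ℕ,
      (∃ Ek : Fin (n1 + n2 + 1) → Matrix (Fin e) (Fin e) ℂ,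
        C * A1 ^ n1 * A2 ^ n2 =
          ∑ k : Fin (n1 + n2 + 1), Ek k * (C * (ξ1 • A1 + ξ2 • A2) ^ (k : ℕ))) ∧
      (⨅ k ∈ Finset.range (n1 + n2 + 1),
          LinearMap.ker (C * (ξ1 • A1 + ξ2 • A2) ^ k).mulVecLin) ≤
        LinearMap.ker (C * A1 ^ n1 * A2 ^ n2).mulVecLin := by
  set Aξ := ξ1 • A1 + ξ2 • A2 with hAξ
  have hc1 : ∀ k : ℕ, Aξ ^ k * A1 = A1 * Aξ ^ k := by
    intro k
    have : Commute A1 Aξ :=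
      Commute.add_right ((Commute.refl A1).smul_right ξ1)
        ((show Commute A1 A2 from hcomm).smul_right ξ2)
    exact (this.pow_right k).symm
  have hc2 : ∀ k : ℕ, Aξ ^ k * A2 = A2 * Aξ ^ k := by
    intro k
    have : Commute A2 Aξ :=
      Commute.add_right ((show Commute A2 A1 from hcomm.symm).smul_right ξ1)
        ((Commute.refl A2).smul_right ξ2)
    exact (this.pow_right k).symm
  have key1 : ∀ k : ℕ, C * Aξ ^ k * A1 = E1 * (C * Aξ ^ k) + E2 * (C * Aξ ^ (k + 1)) := by
    intro k
    calc C * Aξ ^ k * A1 = (C * A1) * Aξ ^ k := by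
          rw [Matrix.mul_assoc, hc1, ← Matrix.mul_assoc]
    _ = E1 * (C * Aξ ^ k) + E2 * (C * Aξ ^ (k + 1)) := by
        rw [h1, pow_succ', Matrix.add_mul, Matrix.mul_assoc E1, Matrix.mul_assoc E2,
          Matrix.mul_assoc C]
  have key2 : ∀ k : ℕ, C * Aξ ^ k * A2 = M0 * (C * Aξ ^ k) + M1 * (C * Aξ ^ (k + 1)) := by
    intro k
    calc C * Aξ ^ k * A2 = (C * A2) * Aξ ^ k := by
          rw [Matrix.mul_assoc, hc2, ← Matrix.mul_assoc]
    _ = M0 * (C * Aξ ^ k) + M1 * (C * Aξ ^ (k + 1)) := by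
        rw [h2, pow_succ', Matrix.add_mul, Matrix.mul_assoc M0, Matrix.mul_assoc M1,
          Matrix.mul_assoc C]
  have step : ∀ (B : Matrix (Fin h) (Fin h) ℂ) (P Q : Matrix (Fin e) (Fin e) ℂ)
      (_ : ∀ k : ℕ, C * Aξ ^ k * B = P * (C * Aξ ^ k) + Q * (C * Aξ ^ (k + 1)))
      (m : ℕ) (X : Matrix (Fin h) (Fin h) ℂ)
      (Ek : ℕ → Matrix (Fin e) (Fin e) ℂ)
      (_ : C * X = ∑ k ∈ Finset.range (m + 1), Ek k * (C * Aξ ^ k)),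
      ∃ Fk : ℕ → Matrix (Fin e) (Fin e) ℂ,
        C * (X * B) = ∑ k ∈ Finset.range (m + 2), Fk k * (C * Aξ ^ k) := by
    intro B P Q hkey m X Ek hX
    refine ⟨fun k => (if k ≤ m then Ek k * P else 0) +
      (if 1 ≤ k then Ek (k - 1) * Q else 0), ?_⟩
    rw [← Matrix.mul_assoc, hX, Matrix.sum_mul]
    have lhs : ∀ k ∈ Finset.range (m + 1),
        Ek k * (C * Aξ ^ k) * B =
          Ek k * P * (C * Aξ ^ k) + Ek k * Q * (C * Aξ ^ (k + 1)) := by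
      intro k _
      rw [Matrix.mul_assoc (Ek k) (C * Aξ ^ k) B,
        hkey k, Matrix.mul_add, ← Matrix.mul_assoc (Ek k) P (C * Aξ ^ k),
        ← Matrix.mul_assoc (Ek k) Q (C * Aξ ^ (k + 1))]
    rw [Finset.sum_congr rfl lhs, Finset.sum_add_distrib]
    have rhs : ∀ k ∈ Finset.range (m + 2),
        ((if k ≤ m then Ek k * P else 0) + (if 1 ≤ k then Ek (k - 1) * Q else 0))
            * (C * Aξ ^ k) =
          (if k ≤ m then Ek k * P else 0) * (C * Aξ ^ k)
            + (if 1 ≤ k then Ek (k - 1) * Q else 0) * (C * Aξ ^ k) := by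
      intro k _
      rw [Matrix.add_mul]
    rw [Finset.sum_congr rfl rhs, Finset.sum_add_distrib]
    congr 1
    · rw [Finset.sum_range_succ
        (fun x => (if x ≤ m then Ek x * P else 0) * (C * Aξ ^ x)) (m + 1)]
      rw [if_neg (by omega : ¬ m + 1 ≤ m), Matrix.zero_mul, add_zero]
      refine (Finset.sum_congr rfl fun k hk => ?_).symm
      rw [if_pos (Nat.lt_succ_iff.mp (Finset.mem_range.mp hk))]
    · rw [Finset.sum_range_succ'
        (fun k => (if 1 ≤ k then Ek (k - 1) * Q else 0) * (C * Aξ ^ k)) (m + 1)]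
      simp only [if_neg (by omega : ¬ (1:ℕ) ≤ 0), Matrix.zero_mul, add_zero]
      refine (Finset.sum_congr rfl fun k _ => ?_).symm
      rw [if_pos (by omega : 1 ≤ k + 1), Nat.add_sub_cancel]
  have main1 : ∀ n : ℕ, ∃ Ek : ℕ → Matrix (Fin e) (Fin e) ℂ,
      C * A1 ^ n = ∑ k ∈ Finset.range (n + 1), Ek k * (C * Aξ ^ k) := by
    intro n
    induction n with
    | zero => exact ⟨fun _ => 1, by simp⟩
    | succ n ih =>
      obtain ⟨Ek, hEk⟩ := ih
      obtain ⟨Fk, hFk⟩ := step A1 E1 E2 key1 n (A1 ^ n) Ek hEk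
      exact ⟨Fk, by rw [pow_succ]; exact hFk⟩
  have main : ∀ n1 n2 : ℕ, ∃ Ek : ℕ → Matrix (Fin e) (Fin e) ℂ,
      C * A1 ^ n1 * A2 ^ n2 = ∑ k ∈ Finset.range (n1 + n2 + 1), Ek k * (C * Aξ ^ k) := by
    intro n1 n2
    induction n2 with
    | zero => simpa using main1 n1
    | succ n ih =>
      obtain ⟨Ek, hEk⟩ := ih
      obtain ⟨Fk, hFk⟩ := step A2 M0 M1 key2 (n1 + n) (A1 ^ n1 * A2 ^ n) Ek
        (by rw [← Matrix.mul_assoc]; exact hEk)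
      refine ⟨Fk, ?_⟩
      rw [show n1 + (n + 1) + 1 = n1 + n + 2 by ring, ← hFk, pow_succ,
        mul_assoc (A1 ^ n1), ← Matrix.mul_assoc C]
  intro n1 n2
  obtain ⟨Ek, hEk⟩ := main n1 n2
  have hfin : C * A1 ^ n1 * A2 ^ n2 =
      ∑ k : Fin (n1 + n2 + 1), Ek (k : ℕ) * (C * Aξ ^ (k : ℕ)) := by
    rw [hEk, ← Fin.sum_univ_eq_sum_range]
  refine ⟨⟨fun k => Ek (k : ℕ), hfin⟩, ?_⟩
  intro x hx
  simp only [Submodule.mem_iInf] at hx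
  have hx' : ∀ k ∈ Finset.range (n1 + n2 + 1),
      (C * Aξ ^ k).mulVec x = 0 := fun k hk => hx k hk
  simp only [LinearMap.mem_ker, Matrix.mulVecLin_apply, hEk]
  rw [sum_mulVec_aux]
  apply Finset.sum_eq_zero
  intro k hk
  rw [← Matrix.mulVec_mulVec, hx' k hk, Matrix.mulVec_zero]
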